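/- arXiv:1912.02717 — 3 statements merged into one kernel-verified Lean document; each statement's English description precedes it below -/
import Mathlib

section
/- Let G be a group of rank r and let H ≤ G be a subgroup of finite index with [G:H] ≥ r. Suppose that every divisor d > 1 of [G : core_G(H)] satisfies d ≥ 2r − 1. Then every generating set S of G of size r is Nielsen equivalent to a multiset whose elements lie in pairwise distinct left cosets of H and in pairwise distinct right cosets of H, and hence is contained in some left-right transversal of H in G. -/
open scoped Classical

section Defs

variable {G : Type*} [Group G]

/-- A single Nielsen move on a finite multiset of group elements: replace one
occurrence of `g` by `g⁻¹`, or by `h * g` or `g * h` where `h` is another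
occurrence in the multiset. -/
def NielsenMove (S T : Multiset G) : Prop :=
  (∃ g ∈ S, T = g⁻¹ ::ₘ S.erase g) ∨
    (∃ g ∈ S, ∃ h ∈ S.erase g, T = h * g ::ₘ S.erase g ∨ T = g * h ::ₘ S.erase g)

/-- Nielsen equivalence: one multiset is obtained from the other by a finite
sequence of Nielsen moves. -/
def NielsenEquiv (S T : Multiset G) : Prop :=
  Relation.ReflTransGen NielsenMove S T

/-- The elements of the multiset `S` lie in pairwise distinct left cosets of `H`. -/
def LeftDistinct (H : Subgroup G) (S : Multiset G) : Prop :=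
  (S.map fun x => ((x : G) : G ⧸ H)).Nodup

/-- The elements of the multiset `S` lie in pairwise distinct right cosets of `H`
(using that `Hx = Hy ↔ x⁻¹H = y⁻¹H`). -/
def RightDistinct (H : Subgroup G) (S : Multiset G) : Prop :=
  (S.map fun x => ((x⁻¹ : G) : G ⧸ H)).Nodup

/-- `T` is a left transversal of `H`: it contains exactly one element of each
left coset of `H`. -/
def IsLeftTransversal (H : Subgroup G) (T : Set G) : Prop :=
  ∀ g : G, ∃! t, t ∈ T ∧ ((t : G) : G ⧸ H) = ((g : G) : G ⧸ H)

/-- `T` is a right transversal of `H`: it contains exactly one element of each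
right coset of `H` (using that `Hx = Hy ↔ x⁻¹H = y⁻¹H`). -/
def IsRightTransversal (H : Subgroup G) (T : Set G) : Prop :=
  ∀ g : G, ∃! t, t ∈ T ∧ ((t⁻¹ : G) : G ⧸ H) = ((g⁻¹ : G) : G ⧸ H)

/-- The left coset `aH` as a set. -/
def lcoset (a : G) (H : Subgroup G) : Set G := {x | a⁻¹ * x ∈ H}

/-- The right coset `Ha` as a set. -/
def rcoset (H : Subgroup G) (a : G) : Set G := {x | x * a⁻¹ ∈ H}

/-- The double coset `HgH` as a set. -/
def dcoset (H : Subgroup G) (g : G) : Set G := {x | ∃ h₁ ∈ H, ∃ h₂ ∈ H, x = h₁ * g * h₂}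

/-- `S` is left-right clean relative to `H`: `S ∖ H` is nonempty and its elements
lie in pairwise distinct left cosets and pairwise distinct right cosets of `H`. -/
def LeftRightClean (H : Subgroup G) (S : Multiset G) : Prop :=
  (∃ x ∈ S, x ∉ H) ∧
    LeftDistinct H (S.filter fun x => x ∉ H) ∧
    RightDistinct H (S.filter fun x => x ∉ H)

end Defs

/-!
Nielsen moves first separate the generators lying outside `H`: whenever two of them share a left
(or a right) coset, a transvection moves one of them into `H`. Then, while at least two generators
lie in `H`, one of them, `h`, is replaced by `u h` with `u` in the subgroup `K` generated by the
others. As `K ⊄ H`, the index `[K : K ∩ H]` is a nontrivial divisor of `[G : core_G(H)]`, hence at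
least `2r - 1`, which exceeds the at most `2r - 2` left and right cosets that `u h` has to avoid.
Fewer left and right cosets of a finite-index subgroup than its index cannot cover the group, as
they meet a common left-right transversal in fewer points than it has. Such transversals exist,
even extending any set whose elements lie in distinct left and distinct right cosets, because
each double coset `HgH` is the union of as many left as right cosets:
`[H : H ∩ gHg⁻¹] = [H : H ∩ g⁻¹Hg]`.
-/

open Multiset

lemma Multiset.exists_mem_erase_of_not_nodup_map {α β : Type*} {f : α → β} {m : Multiset α}
    (h : ¬ (m.map f).Nodup) : ∃ y ∈ m, ∃ x ∈ m.erase y, f x = f y := by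
  induction m using Multiset.induction with
  | empty => simp at h
  | cons a s ih =>
    rw [map_cons, nodup_cons, not_and_or, not_not] at h
    by_cases ha : f a ∈ s.map f
    · obtain ⟨x, hx, hxa⟩ := mem_map.1 ha
      exact ⟨a, mem_cons_self a s, x, by rwa [erase_cons_head], hxa⟩
    · obtain ⟨y, hy, x, hx, hxy⟩ := ih (h.resolve_left ha)
      exact ⟨y, mem_cons_of_mem hy, x, mem_of_le (erase_le_erase y (le_cons_self s a)) hx, hxy⟩

lemma Multiset.nodup_of_card_le_one {α : Type*} {m : Multiset α} (h : card m ≤ 1) : m.Nodup :=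
  nodup_iff_ne_cons_cons.2 fun a t hm => by simp [hm] at h

namespace NielsenMove

variable {G : Type*} [Group G] {S T : Multiset G}

lemma inv_cons (g : G) (rest : Multiset G) : NielsenMove (g ::ₘ rest) (g⁻¹ ::ₘ rest) :=
  Or.inl ⟨g, mem_cons_self _ _, by rw [erase_cons_head]⟩

lemma mul_left_cons {h : G} (g : G) {rest : Multiset G} (hh : h ∈ rest) :
    NielsenMove (g ::ₘ rest) (h * g ::ₘ rest) :=
  Or.inr ⟨g, mem_cons_self _ _, h, by rwa [erase_cons_head], Or.inl (by rw [erase_cons_head])⟩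

lemma mul_right_cons {h : G} (g : G) {rest : Multiset G} (hh : h ∈ rest) :
    NielsenMove (g ::ₘ rest) (g * h ::ₘ rest) :=
  Or.inr ⟨g, mem_cons_self _ _, h, by rwa [erase_cons_head], Or.inr (by rw [erase_cons_head])⟩

lemma exists_cons (hm : NielsenMove S T) :
    ∃ g rest, S = g ::ₘ rest ∧
      (T = g⁻¹ ::ₘ rest ∨ ∃ h ∈ rest, T = h * g ::ₘ rest ∨ T = g * h ::ₘ rest) := by
  rcases hm with ⟨g, hg, rfl⟩ | ⟨g, hg, h, hh, hT⟩
  · exact ⟨g, S.erase g, (cons_erase hg).symm, Or.inl rfl⟩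
  · exact ⟨g, S.erase g, (cons_erase hg).symm, Or.inr ⟨h, hh, hT⟩⟩

lemma card_eq (hm : NielsenMove S T) : card T = card S := by
  obtain ⟨g, rest, rfl, rfl | ⟨h, -, rfl | rfl⟩⟩ := hm.exists_cons <;> simp

lemma closure_le (hm : NielsenMove S T) :
    Subgroup.closure {x | x ∈ T} ≤ Subgroup.closure {x | x ∈ S} := by
  obtain ⟨g, rest, rfl, hT⟩ := hm.exists_cons
  have hg : g ∈ Subgroup.closure {x | x ∈ g ::ₘ rest} := Subgroup.subset_closure (mem_cons_self _ _)
  have hrest : ∀ x ∈ rest, x ∈ Subgroup.closure {x | x ∈ g ::ₘ rest} :=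
    fun x hx => Subgroup.subset_closure (mem_cons_of_mem hx)
  rw [Subgroup.closure_le]
  rintro x hx
  rcases hT with rfl | ⟨h, hh, rfl | rfl⟩ <;> rcases mem_cons.1 hx with rfl | hx
  all_goals first
    | exact hrest x hx
    | exact inv_mem hg
    | exact mul_mem (hrest h hh) hg
    | exact mul_mem hg (hrest h hh)

lemma nielsenEquiv_symm (hm : NielsenMove S T) : NielsenEquiv T S := by
  obtain ⟨g, rest, rfl, rfl | ⟨h, hh, rfl | rfl⟩⟩ := hm.exists_cons
  · exact .single (by simpa using inv_cons g⁻¹ rest)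
  · refine .tail (.tail (.single (inv_cons _ rest)) ?_) (by simpa using inv_cons g⁻¹ rest)
    simpa using mul_right_cons (h * g)⁻¹ hh
  · refine .tail (.tail (.single (inv_cons _ rest)) ?_) (by simpa using inv_cons g⁻¹ rest)
    simpa using mul_left_cons (g * h)⁻¹ hh

end NielsenMove

namespace NielsenEquiv

variable {G : Type*} [Group G] {S T U : Multiset G}

lemma refl (S : Multiset G) : NielsenEquiv S S := Relation.ReflTransGen.refl

lemma trans (h : NielsenEquiv S T) (h' : NielsenEquiv T U) : NielsenEquiv S U :=
  Relation.ReflTransGen.trans h h'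

lemma symm (h : NielsenEquiv S T) : NielsenEquiv T S := by
  induction h with
  | refl => exact refl _
  | tail _ hm ih => exact hm.nielsenEquiv_symm.trans ih

lemma card_eq (h : NielsenEquiv S T) : card T = card S := by
  induction h with
  | refl => rfl
  | tail _ hm ih => rw [hm.card_eq, ih]

lemma closure_eq (h : NielsenEquiv S T) :
    Subgroup.closure {x | x ∈ T} = Subgroup.closure {x | x ∈ S} := by
  have closure_le : ∀ {S T : Multiset G}, NielsenEquiv S T →
      Subgroup.closure {x | x ∈ T} ≤ Subgroup.closure {x | x ∈ S} := by
    intro S T h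
    induction h with
    | refl => exact le_rfl
    | tail _ hm ih => exact hm.closure_le.trans ih
  exact le_antisymm (closure_le h) (closure_le h.symm)

lemma mul_left_cons (g : G) {rest : Multiset G} {u : G}
    (hu : u ∈ Subgroup.closure {x | x ∈ rest}) :
    NielsenEquiv (g ::ₘ rest) (u * g ::ₘ rest) := by
  induction hu using Subgroup.closure_induction generalizing g with
  | mem s hs => exact .single (NielsenMove.mul_left_cons g hs)
  | one => simpa using refl _
  | mul a b _ _ ha hb => simpa [mul_assoc] using (hb g).trans (ha (b * g))
  | inv a _ ha => simpa using (ha (a⁻¹ * g)).symm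

lemma mul_right_cons (g : G) {rest : Multiset G} {u : G}
    (hu : u ∈ Subgroup.closure {x | x ∈ rest}) :
    NielsenEquiv (g ::ₘ rest) (g * u ::ₘ rest) := by
  induction hu using Subgroup.closure_induction generalizing g with
  | mem s hs => exact .single (NielsenMove.mul_right_cons g hs)
  | one => simpa using refl _
  | mul a b _ _ ha hb => simpa [mul_assoc] using (ha g).trans (hb (g * a))
  | inv a _ ha => simpa using (ha (g * a⁻¹)).symm

end NielsenEquiv

lemma Equiv.exists_extending_pair_of_card_eq {A B F : Type*} [Finite A] [Finite B]
    (h : Nat.card A = Nat.card B) {u : F → A} {v : F → B} (hu : Function.Injective u)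
    (hv : Function.Injective v) : ∃ e : A ≃ B, ∀ f, e (u f) = v f := by
  have : Finite F := Finite.of_injective u hu
  obtain ⟨σ⟩ := Finite.card_eq.1 h
  obtain ⟨π, hπ⟩ := Equiv.Perm.exists_extending_pair u (σ.symm ∘ v) hu (σ.symm.injective.comp hv)
  exact ⟨π.trans σ, fun f => by simp [hπ]⟩

lemma Equiv.exists_fiberwise_extending_pair {X I F : Type*} [Finite X] (α β : X → I)
    (hfib : ∀ i, Nat.card {x // α x = i} = Nat.card {x // β x = i}) {u v : F → X}
    (hu : Function.Injective u) (hv : Function.Injective v) (huv : ∀ f, α (u f) = β (v f)) :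
    ∃ φ : X ≃ X, (∀ x, β (φ x) = α x) ∧ ∀ f, φ (u f) = v f := by
  have fiber (i : I) : ∃ e : {x // α x = i} ≃ {x // β x = i},
      ∀ f : {f // α (u f) = i}, e ⟨u f, f.2⟩ = ⟨v f, huv f ▸ f.2⟩ :=
    exists_extending_pair_of_card_eq (hfib i)
      (u := fun f : {f // α (u f) = i} => ⟨u f, f.2⟩) (v := fun f => ⟨v f, huv f ▸ f.2⟩)
      (fun f g hfg => Subtype.ext (hu (congrArg Subtype.val hfg)))
      (fun f g hfg => Subtype.ext (hv (congrArg Subtype.val hfg)))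
  choose e he using fiber
  exact ⟨ofFiberEquiv e, ofFiberEquiv_map e, fun f => congrArg Subtype.val (he _ ⟨f, rfl⟩)⟩

namespace Subgroup

variable {G : Type*} [Group G]

lemma relIndex_comm_of_index_eq {H K : Subgroup G} (h : H.index = K.index) (hK : K.index ≠ 0) :
    H.relIndex K = K.relIndex H := by
  have hHK := relIndex_mul_index (inf_le_right : H ⊓ K ≤ K)
  have hKH := relIndex_mul_index (inf_le_right : K ⊓ H ≤ H)
  rw [inf_relIndex_right] at hHK
  rw [inf_relIndex_right, inf_comm, ← hHK, h] at hKH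
  exact (Nat.eq_of_mul_eq_mul_right (Nat.pos_of_ne_zero hK) hKH).symm

lemma relIndex_dvd_index_normalCore (H K : Subgroup G) : H.relIndex K ∣ H.normalCore.index :=
  (relIndex_dvd_of_le_left K (normalCore_le H)).trans (relIndex_dvd_index_of_normal _ _)

end Subgroup

namespace QuotientGroup

open MulAction

variable {G : Type*} [Group G] (H : Subgroup G)

variable {H} in
lemma mk_eq_mk_one_iff {x : G} :
    (x : G ⧸ H) = ((1 : G) : G ⧸ H) ↔ x ∈ H := by
  rw [QuotientGroup.eq, mul_one, inv_mem_iff]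

/-- `H`-orbits in `G ⧸ H` are the double cosets `HgH`; encoding the right coset `Hx⁻¹` by `xH`,
this sends a right coset to the double coset containing it. -/
def invOrbit : G ⧸ H → orbitRel.Quotient H (G ⧸ H) :=
  Quotient.map' (fun x => ((x⁻¹ : G) : G ⧸ H)) fun a b hab =>
    ⟨⟨a⁻¹ * b, QuotientGroup.leftRel_apply.1 hab⟩,
      show ((a⁻¹ * b * b⁻¹ : G) : G ⧸ H) = _ by rw [mul_inv_cancel_right]⟩

lemma invOrbit_mk (x : G) :
    invOrbit H x = Quotient.mk'' ((x⁻¹ : G) : G ⧸ H) := rfl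

lemma mem_orbit_inv_of_inv_mem_orbit {x g : G} (h : ((x⁻¹ : G) : G ⧸ H) ∈ orbit H (g : G ⧸ H)) :
    (x : G ⧸ H) ∈ orbit H ((g⁻¹ : G) : G ⧸ H) := by
  obtain ⟨⟨h, hh⟩, hx⟩ := h
  have hk : (h * g)⁻¹ * x⁻¹ ∈ H := QuotientGroup.eq.1 hx
  refine ⟨⟨((h * g)⁻¹ * x⁻¹)⁻¹, inv_mem hk⟩, ?_⟩
  show ((((h * g)⁻¹ * x⁻¹)⁻¹ * g⁻¹ : G) : G ⧸ H) = x
  rw [QuotientGroup.eq]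
  convert inv_mem hh using 1
  group

lemma mem_orbit_inv_iff {x g : G} :
    (x : G ⧸ H) ∈ orbit H ((g⁻¹ : G) : G ⧸ H) ↔ ((x⁻¹ : G) : G ⧸ H) ∈ orbit H (g : G ⧸ H) :=
  ⟨fun h => by simpa using mem_orbit_inv_of_inv_mem_orbit H (x := x⁻¹) (g := g⁻¹) (by simpa),
    mem_orbit_inv_of_inv_mem_orbit H⟩

lemma card_orbit_inv [H.FiniteIndex] (g : G) :
    Nat.card (orbit H ((g⁻¹ : G) : G ⧸ H)) = Nat.card (orbit H (g : G ⧸ H)) := by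
  have card_orbit (x : G ⧸ H) : Nat.card (orbit H x) = (stabilizer G x).relIndex H := by
    rw [Nat.card_coe_set_eq, ← index_stabilizer]; rfl
  have hinv : stabilizer G ((g⁻¹ : G) : G ⧸ H) = H.map (MulAut.conj g⁻¹).toMonoidHom := by
    simpa using stabilizer_smul_eq_stabilizer_map_conj g⁻¹ ((1 : G) : G ⧸ H)
  have hH : (stabilizer G (g : G ⧸ H)).map (MulAut.conj g⁻¹).toMonoidHom = H := by
    simpa using (stabilizer_smul_eq_stabilizer_map_conj g⁻¹ (g : G ⧸ H)).symm
  have hindex : H.index = (stabilizer G (g : G ⧸ H)).index :=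
    (index_stabilizer_of_transitive G _).symm
  calc Nat.card (orbit H ((g⁻¹ : G) : G ⧸ H))
      = (H.map (MulAut.conj g⁻¹).toMonoidHom).relIndex
          ((stabilizer G (g : G ⧸ H)).map (MulAut.conj g⁻¹).toMonoidHom) := by
        rw [card_orbit, hinv, hH]
    _ = H.relIndex (stabilizer G (g : G ⧸ H)) :=
        Subgroup.relIndex_map_map_of_injective _ _ (MulEquiv.injective _)
    _ = Nat.card (orbit H (g : G ⧸ H)) := by
        rw [card_orbit, Subgroup.relIndex_comm_of_index_eq hindex
          (hindex ▸ Subgroup.FiniteIndex.index_ne_zero)]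

/-- Every double coset `HgH` contains as many left cosets as right cosets of `H`. -/
lemma card_invOrbit_fiber [H.FiniteIndex] (ω : orbitRel.Quotient H (G ⧸ H)) :
    Nat.card {q // (Quotient.mk'' q : orbitRel.Quotient H (G ⧸ H)) = ω} =
      Nat.card {q // invOrbit H q = ω} := by
  obtain ⟨g, rfl⟩ : ∃ g : G, Quotient.mk'' (g : G ⧸ H) = ω := by
    obtain ⟨q, rfl⟩ := Quotient.exists_rep ω
    obtain ⟨g, rfl⟩ := QuotientGroup.mk_surjective q
    exact ⟨g, rfl⟩
  have hα : {q : G ⧸ H |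
      (Quotient.mk'' q : orbitRel.Quotient H (G ⧸ H)) = Quotient.mk'' (g : G ⧸ H)} =
      orbit H (g : G ⧸ H) := by
    ext q
    exact orbitRel.Quotient.mem_orbit.symm
  have hβ : {q | invOrbit H q = Quotient.mk'' (g : G ⧸ H)} = orbit H ((g⁻¹ : G) : G ⧸ H) := by
    ext q
    obtain ⟨x, rfl⟩ := QuotientGroup.mk_surjective q
    rw [Set.mem_ofPred_eq, invOrbit_mk, mem_orbit_inv_iff, ← orbitRel.Quotient.mem_orbit]
    rfl
  exact (Nat.card_congr (Equiv.setCongr hα)).trans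
    ((card_orbit_inv H g).symm.trans (Nat.card_congr (Equiv.setCongr hβ)).symm)

end QuotientGroup

section Transversal

open MulAction QuotientGroup

variable {G : Type*} [Group G] (H : Subgroup G)

lemma exists_mk_eq_and_mk_inv_eq {l m : G ⧸ H} (h : invOrbit H m = Quotient.mk'' l) :
    ∃ z : G, (z : G ⧸ H) = l ∧ ((z⁻¹ : G) : G ⧸ H) = m := by
  obtain ⟨w, rfl⟩ := QuotientGroup.mk_surjective l
  obtain ⟨w', rfl⟩ := QuotientGroup.mk_surjective m
  obtain ⟨⟨h, hh⟩, hw⟩ : ((w'⁻¹ : G) : G ⧸ H) ∈ orbit H (w : G ⧸ H) :=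
    orbitRel.Quotient.mem_orbit.2 h
  have hk : (h * w)⁻¹ * w'⁻¹ ∈ H := QuotientGroup.eq.1 hw
  refine ⟨w * ((h * w)⁻¹ * w'⁻¹), QuotientGroup.eq.2 ?_, QuotientGroup.eq.2 ?_⟩
  · convert inv_mem hk using 1
    group
  · convert inv_mem hh using 1
    group

theorem exists_section_of_injOn [H.FiniteIndex] {P : Set G}
    (hL : P.InjOn fun x : G => (x : G ⧸ H)) (hR : P.InjOn fun x => ((x⁻¹ : G) : G ⧸ H)) :
    ∃ (e : G ⧸ H → G) (φ : G ⧸ H ≃ G ⧸ H), (∀ q, (e q : G ⧸ H) = q) ∧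
      (∀ q, (((e q)⁻¹ : G) : G ⧸ H) = φ q) ∧ ∀ x ∈ P, e x = x := by
  obtain ⟨φ, hφ, hφP⟩ := Equiv.exists_fiberwise_extending_pair (fun q => Quotient.mk'' q)
    (invOrbit H) (card_invOrbit_fiber H) (u := fun p : P => ((p : G) : G ⧸ H))
    (v := fun p : P => (((p : G)⁻¹ : G) : G ⧸ H))
    (fun p p' hpp' => Subtype.ext (hL p.2 p'.2 hpp'))
    (fun p p' hpp' => Subtype.ext (hR p.2 p'.2 hpp'))
    (fun p => by rw [invOrbit_mk, inv_inv])
  have rep (q : G ⧸ H) : ∃ z : G, (z : G ⧸ H) = q ∧ ((z⁻¹ : G) : G ⧸ H) = φ q ∧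
      ∀ x ∈ P, (x : G ⧸ H) = q → z = x := by
    by_cases hq : ∃ x ∈ P, (x : G ⧸ H) = q
    · obtain ⟨x, hx, rfl⟩ := hq
      exact ⟨x, rfl, (hφP ⟨x, hx⟩).symm, fun y hy hxy => hL hx hy hxy.symm⟩
    · obtain ⟨z, hzl, hzr⟩ := exists_mk_eq_and_mk_inv_eq H (hφ q)
      exact ⟨z, hzl, hzr, fun x hx hxq => (hq ⟨x, hx, hxq⟩).elim⟩
  choose e hel her heP using rep
  exact ⟨e, φ, hel, her, fun x hx => heP _ x hx rfl⟩

lemma isLeftTransversal_range {e : G ⧸ H → G} (he : ∀ q, (e q : G ⧸ H) = q) :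
    IsLeftTransversal H (Set.range e) := by
  intro g
  refine ⟨e g, ⟨Set.mem_range_self _, he _⟩, ?_⟩
  rintro _ ⟨⟨q, rfl⟩, hq⟩
  rw [he] at hq
  rw [hq]

lemma isRightTransversal_range {e : G ⧸ H → G} (φ : G ⧸ H ≃ G ⧸ H)
    (he : ∀ q, (((e q)⁻¹ : G) : G ⧸ H) = φ q) : IsRightTransversal H (Set.range e) := by
  intro g
  refine ⟨e (φ.symm ((g⁻¹ : G) : G ⧸ H)),
    ⟨Set.mem_range_self _, by rw [he, Equiv.apply_symm_apply]⟩, ?_⟩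
  rintro _ ⟨⟨q, rfl⟩, hq⟩
  rw [he] at hq
  rw [← hq, Equiv.symm_apply_apply]

theorem exists_leftRightTransversal_of_injOn [H.FiniteIndex] {P : Set G}
    (hL : P.InjOn fun x : G => (x : G ⧸ H)) (hR : P.InjOn fun x => ((x⁻¹ : G) : G ⧸ H)) :
    ∃ T, IsLeftTransversal H T ∧ IsRightTransversal H T ∧ P ⊆ T := by
  obtain ⟨e, φ, hel, her, heP⟩ := exists_section_of_injOn H hL hR
  exact ⟨Set.range e, isLeftTransversal_range H hel, isRightTransversal_range H φ her,
    fun x hx => ⟨x, heP x hx⟩⟩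

/-- A common left-right transversal of `H` has `[G : H]` elements and meets each fibre of `fl`
and of `fr` at most once. -/
lemma exists_notMem_of_card_add_card_lt_index {β : Type*} [H.FiniteIndex] {fl fr : G → β}
    (hfl : ∀ a b, fl a = fl b → (a : G ⧸ H) = b)
    (hfr : ∀ a b, fr a = fr b → ((a⁻¹ : G) : G ⧸ H) = (b⁻¹ : G))
    (A B : Multiset β) (h : Multiset.card A + Multiset.card B < H.index) :
    ∃ u, fl u ∉ A ∧ fr u ∉ B := by
  obtain ⟨e, φ, hel, her, -⟩ := exists_section_of_injOn H (P := ∅) (by simp) (by simp)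
  have : Fintype (G ⧸ H) := Fintype.ofFinite _
  have hA : (Finset.univ.filter fun q => fl (e q) ∈ A).card ≤ Multiset.card A :=
    (Finset.card_le_card_of_injOn (fl ∘ e) (fun q hq => by simpa using hq)
      (fun q _ q' _ hqq' => by simpa [hel] using hfl _ _ hqq')).trans
      (Multiset.toFinset_card_le A)
  have hB : (Finset.univ.filter fun q => fr (e q) ∈ B).card ≤ Multiset.card B :=
    (Finset.card_le_card_of_injOn (fr ∘ e) (fun q hq => by simpa using hq)
      (fun q _ q' _ hqq' => φ.injective (by rw [← her, ← her]; exact hfr _ _ hqq'))).trans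
      (Multiset.toFinset_card_le B)
  have hbad : ((Finset.univ.filter fun q => fl (e q) ∈ A) ∪
      Finset.univ.filter fun q => fr (e q) ∈ B).card < (Finset.univ : Finset (G ⧸ H)).card := by
    rw [Finset.card_univ, ← Nat.card_eq_fintype_card]
    exact (Finset.card_union_le _ _).trans_lt (by unfold Subgroup.index at h; omega)
  obtain ⟨q, -, hq⟩ := Finset.exists_mem_notMem_of_card_lt_card hbad
  simp only [Finset.mem_union, Finset.mem_filter, Finset.mem_univ, true_and, not_or] at hq
  exact ⟨e q, hq⟩

end Transversal

section NielsenReduction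

variable {G : Type*} [Group G] (H : Subgroup G)

def LeftRightDistinctOutside (S : Multiset G) : Prop :=
  LeftDistinct H (S.filter (· ∉ H)) ∧ RightDistinct H (S.filter (· ∉ H))

variable {H}

lemma card_filter_notMem_cons_erase {S : Multiset G} {y z : G} (hy : y ∈ S) (hyH : y ∉ H)
    (hz : z ∈ H) : card ((z ::ₘ S.erase y).filter (· ∉ H)) + 1 = card (S.filter (· ∉ H)) := by
  conv_rhs => rw [← cons_erase hy]
  rw [filter_cons_of_neg (p := (· ∉ H)) _ (not_not.2 hz),
    filter_cons_of_pos (p := (· ∉ H)) _ hyH, card_cons]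

lemma exists_nielsenEquiv_cons_erase_of_not_leftRightDistinctOutside {S : Multiset G}
    (hS : ¬ LeftRightDistinctOutside H S) :
    ∃ y ∈ S, y ∉ H ∧ ∃ z ∈ H, NielsenEquiv S (z ::ₘ S.erase y) := by
  have collision (f : G → G ⧸ H) (hf : ¬ ((S.filter (· ∉ H)).map f).Nodup) :
      ∃ y ∈ S, y ∉ H ∧ ∃ x ∈ S.erase y, f x = f y := by
    obtain ⟨y, hy, x, hx, hxy⟩ := exists_mem_erase_of_not_nodup_map hf
    exact ⟨y, (mem_filter.1 hy).1, (mem_filter.1 hy).2, x,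
      mem_of_le (erase_le_erase y (filter_le _ S)) hx, hxy⟩
  rcases not_and_or.1 hS with hL | hR
  · obtain ⟨y, hy, hyH, x, hx, hxy⟩ := collision _ hL
    have he := NielsenEquiv.mul_left_cons y (inv_mem (Subgroup.subset_closure hx))
    rw [cons_erase hy] at he
    exact ⟨y, hy, hyH, x⁻¹ * y, QuotientGroup.eq.1 hxy, he⟩
  · obtain ⟨y, hy, hyH, x, hx, hxy⟩ := collision _ hR
    have he := NielsenEquiv.mul_right_cons y (inv_mem (Subgroup.subset_closure hx))
    rw [cons_erase hy] at he
    refine ⟨y, hy, hyH, y * x⁻¹, ?_, he⟩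
    simpa using inv_mem (QuotientGroup.eq.1 hxy)

theorem exists_nielsenEquiv_leftRightDistinctOutside (S : Multiset G) :
    ∃ S', NielsenEquiv S S' ∧ LeftRightDistinctOutside H S' := by
  induction hn : card (S.filter (· ∉ H)) using Nat.strong_induction_on generalizing S with
  | _ n ih =>
  by_cases hS : LeftRightDistinctOutside H S
  · exact ⟨S, .refl S, hS⟩
  obtain ⟨y, hy, hyH, z, hz, he⟩ :=
    exists_nielsenEquiv_cons_erase_of_not_leftRightDistinctOutside hS
  have hlt := card_filter_notMem_cons_erase hy hyH hz
  obtain ⟨S', he', hS'⟩ := ih _ (by omega) (z ::ₘ S.erase y) rfl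
  exact ⟨S', he.trans he', hS'⟩

lemma exists_mem_mul_mk_notMem (K : Subgroup G) (hK : H.relIndex K ≠ 0) {g : G} (hg : g ∈ H)
    (A B : Multiset (G ⧸ H)) (h : card A + card B < H.relIndex K) :
    ∃ u ∈ K, ((u * g : G) : G ⧸ H) ∉ A ∧ (((u * g)⁻¹ : G) : G ⧸ H) ∉ B := by
  have : (H.subgroupOf K).FiniteIndex := ⟨hK⟩
  obtain ⟨u, hu⟩ := exists_notMem_of_card_add_card_lt_index (H.subgroupOf K)
    (fl := fun u : K => ((u * g : G) : G ⧸ H)) (fr := fun u : K => (((u * g)⁻¹ : G) : G ⧸ H))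
    (fun a b hab => QuotientGroup.eq.2 <| Subgroup.mem_subgroupOf.2 <| by
      convert H.mul_mem (H.mul_mem hg (QuotientGroup.eq.1 hab)) (inv_mem hg) using 1
      simp only [Subgroup.coe_mul, Subgroup.coe_inv]
      group)
    (fun a b hab => QuotientGroup.eq.2 <| Subgroup.mem_subgroupOf.2 <| by
      convert QuotientGroup.eq.1 hab using 1
      simp only [Subgroup.coe_mul, Subgroup.coe_inv]
      group)
    A B h
  exact ⟨u, u.2, hu⟩

/-- The index bound leaves room for `u` outside the at most `2 |S| - 2` cosets that `u h₁` must
avoid. -/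
lemma exists_nielsenEquiv_cons_erase_of_mem [H.FiniteIndex] {S : Multiset G}
    (hdiv : ∀ d : ℕ, d ∣ H.normalCore.index → 1 < d → 2 * card S - 1 ≤ d)
    (hgen : Subgroup.closure {x | x ∈ S} = ⊤) (hH : H ≠ ⊤) (hS : LeftRightDistinctOutside H S)
    {h₁ : G} (h₁S : h₁ ∈ S) (h₁H : h₁ ∈ H) (hin : 2 ≤ card (S.filter (· ∈ H))) :
    ∃ z ∉ H, NielsenEquiv S (z ::ₘ S.erase h₁) ∧ LeftRightDistinctOutside H (z ::ₘ S.erase h₁) := by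
  set K := Subgroup.closure {x | x ∈ S.erase h₁}
  have hKH : ¬ K ≤ H := by
    refine fun hKH => hH (eq_top_iff.2 (hgen ▸ (Subgroup.closure_le H).2 fun x hx => ?_))
    by_cases hx₁ : x = h₁
    · exact hx₁ ▸ h₁H
    · exact hKH (Subgroup.subset_closure ((mem_erase_of_ne hx₁).2 hx))
  have hdvd := H.relIndex_dvd_index_normalCore K
  have hK0 : H.relIndex K ≠ 0 := fun h0 =>
    Subgroup.FiniteIndex.index_ne_zero (zero_dvd_iff.1 (h0 ▸ hdvd))
  have hK1 : H.relIndex K ≠ 1 := mt Subgroup.relIndex_eq_one.1 hKH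
  have hbound := hdiv _ hdvd (by omega)
  have hsplit := congrArg card (filter_add_not (· ∈ H) S)
  rw [card_add] at hsplit
  have hO : (S.erase h₁).filter (· ∉ H) = S.filter (· ∉ H) := by
    conv_rhs => rw [← cons_erase h₁S, filter_cons_of_neg (p := (· ∉ H)) _ (not_not.2 h₁H)]
  set O := S.filter (· ∉ H)
  obtain ⟨u, hu, hL, hR⟩ := exists_mem_mul_mk_notMem K hK0 h₁H
    (((1 : G) : G ⧸ H) ::ₘ O.map fun x => ((x : G) : G ⧸ H))
    (((1 : G) : G ⧸ H) ::ₘ O.map fun x => ((x⁻¹ : G) : G ⧸ H))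
    (by simp only [card_cons, card_map]; omega)
  have hz : u * h₁ ∉ H := fun hz =>
    hL (mem_cons.2 (Or.inl (QuotientGroup.mk_eq_mk_one_iff.2 hz)))
  have hfilter : (u * h₁ ::ₘ S.erase h₁).filter (· ∉ H) = u * h₁ ::ₘ O := by
    rw [filter_cons_of_pos (p := (· ∉ H)) _ hz, hO]
  refine ⟨u * h₁, hz, ?_, ?_⟩
  · have he := NielsenEquiv.mul_left_cons h₁ hu
    rwa [cons_erase h₁S] at he
  · rw [LeftRightDistinctOutside, hfilter, LeftDistinct, RightDistinct, map_cons, map_cons,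
      nodup_cons, nodup_cons]
    exact ⟨⟨fun h => hL (mem_cons_of_mem h), hS.1⟩, ⟨fun h => hR (mem_cons_of_mem h), hS.2⟩⟩

theorem exists_nielsenEquiv_card_filter_mem_le_one [H.FiniteIndex] {S : Multiset G}
    (hdiv : ∀ d : ℕ, d ∣ H.normalCore.index → 1 < d → 2 * card S - 1 ≤ d)
    (hindex : card S ≤ H.index) (hgen : Subgroup.closure {x | x ∈ S} = ⊤)
    (hS : LeftRightDistinctOutside H S) :
    ∃ S', NielsenEquiv S S' ∧ card (S'.filter (· ∈ H)) ≤ 1 ∧ LeftRightDistinctOutside H S' := by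
  induction hn : card (S.filter (· ∈ H)) using Nat.strong_induction_on generalizing S with
  | _ n ih =>
  by_cases hin : card (S.filter (· ∈ H)) ≤ 1
  · exact ⟨S, .refl S, hin, hS⟩
  have hfS : card (S.filter (· ∈ H)) ≤ card S := card_le_card (filter_le _ S)
  have hH : H ≠ ⊤ := by
    rintro rfl
    rw [Subgroup.index_top] at hindex
    omega
  obtain ⟨h₁, hh₁⟩ := card_pos_iff_exists_mem.1 (show 0 < card (S.filter (· ∈ H)) by omega)
  obtain ⟨h₁S, h₁H⟩ := mem_filter.1 hh₁
  obtain ⟨z, hz, he, hS'⟩ :=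
    exists_nielsenEquiv_cons_erase_of_mem hdiv hgen hH hS h₁S h₁H (by omega)
  have hlt : card ((z ::ₘ S.erase h₁).filter (· ∈ H)) + 1 = card (S.filter (· ∈ H)) := by
    conv_rhs => rw [← cons_erase h₁S]
    rw [filter_cons_of_neg (p := (· ∈ H)) _ hz, filter_cons_of_pos (p := (· ∈ H)) _ h₁H, card_cons]
  obtain ⟨S', he', hin', hS''⟩ := ih _ (by omega) (he.card_eq ▸ hdiv) (he.card_eq ▸ hindex)
    (he.closure_eq ▸ hgen) hS' rfl
  exact ⟨S', he.trans he', hin', hS''⟩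

lemma nodup_map_of_card_filter_mem_le_one {β : Type*} {S : Multiset G} {f : G → β} {b : β}
    (hf : ∀ x, f x = b ↔ x ∈ H) (hin : card (S.filter (· ∈ H)) ≤ 1)
    (hout : ((S.filter (· ∉ H)).map f).Nodup) : (S.map f).Nodup := by
  rw [← filter_add_not (· ∈ H) S, map_add, nodup_add]
  refine ⟨nodup_of_card_le_one (by rwa [card_map]), hout, disjoint_left.2 fun hx hy => ?_⟩
  obtain ⟨x, hxS, rfl⟩ := mem_map.1 hx
  obtain ⟨y, hyS, hyx⟩ := mem_map.1 hy
  exact (mem_filter.1 hyS).2 ((hf y).1 (hyx.trans ((hf x).2 (mem_filter.1 hxS).2)))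

end NielsenReduction

theorem stmt2_general {G : Type*} [Group G] (r : ℕ)
    (H : Subgroup G) [H.FiniteIndex] (hindex : r ≤ H.index)
    (hdiv : ∀ d : ℕ, d ∣ H.normalCore.index → 1 < d → 2 * r - 1 ≤ d)
    (S : Multiset G) (hcard : S.card = r)
    (hgen : Subgroup.closure {x : G | x ∈ S} = ⊤) :
    ∃ S' : Multiset G, NielsenEquiv S S' ∧ LeftDistinct H S' ∧ RightDistinct H S' ∧
      ∃ T : Set G, IsLeftTransversal H T ∧ IsRightTransversal H T ∧ ∀ x ∈ S', x ∈ T := by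
  subst hcard
  obtain ⟨S₁, he₁, hS₁⟩ := exists_nielsenEquiv_leftRightDistinctOutside (H := H) S
  obtain ⟨S₂, he₂, hin, hS₂⟩ := exists_nielsenEquiv_card_filter_mem_le_one (he₁.card_eq ▸ hdiv)
    (he₁.card_eq ▸ hindex) (he₁.closure_eq ▸ hgen) hS₁
  have hL : LeftDistinct H S₂ :=
    nodup_map_of_card_filter_mem_le_one (fun _ => QuotientGroup.mk_eq_mk_one_iff) hin hS₂.1
  have hR : RightDistinct H S₂ :=
    nodup_map_of_card_filter_mem_le_one
      (fun _ => QuotientGroup.mk_eq_mk_one_iff.trans inv_mem_iff) hin hS₂.2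
  obtain ⟨T, hTL, hTR, hT⟩ := exists_leftRightTransversal_of_injOn H (P := {x | x ∈ S₂})
    (fun x hx y hy => inj_on_of_nodup_map hL x hx y hy)
    (fun x hx y hy => inj_on_of_nodup_map hR x hx y hy)
  exact ⟨S₂, he₁.trans he₂, hL, hR, T, hTL, hTR, fun x hx => hT hx⟩

/-- rank-`r` group, finite index subgroup `H` with `[G:H] ≥ r`, and
every nontrivial divisor of `[G : core_G(H)]` at least `2r - 1`: every generating
set of size `r` is Nielsen equivalent to a multiset in pairwise distinct left and
right cosets of `H`, contained in a left-right transversal. -/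
theorem stmt2 {G : Type*} [Group G] [Group.FG G] (r : ℕ) (hrank : Group.rank G = r)
    (H : Subgroup G) [H.FiniteIndex] (hindex : r ≤ H.index)
    (hdiv : ∀ d : ℕ, d ∣ H.normalCore.index → 1 < d → 2 * r - 1 ≤ d)
    (S : Multiset G) (hcard : S.card = r) (hnd : S.Nodup)
    (hgen : Subgroup.closure {x : G | x ∈ S} = ⊤) :
    ∃ S' : Multiset G, NielsenEquiv S S' ∧ LeftDistinct H S' ∧ RightDistinct H S' ∧
      ∃ T : Set G, IsLeftTransversal H T ∧ IsRightTransversal H T ∧ ∀ x ∈ S', x ∈ T :=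
  stmt2_general r H hindex hdiv S hcard hgen
end

section
/- Let G be a group with a subgroup H of finite index, and let S be a finite multiset of elements of G which generates G. If [G:H] ≥ |S|, then S is Nielsen equivalent to a multiset whose elements lie in pairwise distinct left cosets of H; in particular, there exists a left transversal of H in G which generates G. -/
open scoped Classical

section Aux

variable {G : Type*} [Group G]

lemma nielsenMove_card {S T : Multiset G} (h : NielsenMove S T) :
    Multiset.card T = Multiset.card S := by
  rcases h with ⟨g, hg, rfl⟩ | ⟨g, hg, h, hh, rfl | rfl⟩ <;>
    rw [Multiset.card_cons, Multiset.card_erase_add_one hg]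

lemma nielsenMove_closure {S T : Multiset G} (h : NielsenMove S T) :
    Subgroup.closure {x : G | x ∈ T} = Subgroup.closure {x : G | x ∈ S} := by
  have key : ∀ (g v : G), g ∈ S → T = v ::ₘ S.erase g →
      v ∈ Subgroup.closure {x : G | x ∈ S} →
      g ∈ Subgroup.closure {x : G | x ∈ T} →
      Subgroup.closure {x : G | x ∈ T} = Subgroup.closure {x : G | x ∈ S} := by
    intro g v hg hT hv hgT
    apply le_antisymm
    · rw [Subgroup.closure_le]
      intro x hx
      rw [hT, Set.mem_setOf_eq, Multiset.mem_cons] at hx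
      rcases hx with rfl | hx
      · exact hv
      · exact Subgroup.subset_closure (Multiset.mem_of_mem_erase hx)
    · rw [Subgroup.closure_le]
      intro x hx
      rw [Set.mem_setOf_eq, ← Multiset.cons_erase hg, Multiset.mem_cons] at hx
      rcases hx with rfl | hx
      · exact hgT
      · exact Subgroup.subset_closure (by rw [hT]; exact Multiset.mem_cons_of_mem hx)
  have hvT : ∀ (v : G) (R : Multiset G), T = v ::ₘ R → v ∈ Subgroup.closure {x : G | x ∈ T} :=
    fun v R hT => Subgroup.subset_closure (by rw [hT]; exact Multiset.mem_cons_self v R)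
  have hRT : ∀ (v : G) (R : Multiset G), T = v ::ₘ R → ∀ y ∈ R,
      y ∈ Subgroup.closure {x : G | x ∈ T} :=
    fun v R hT y hy => Subgroup.subset_closure (by rw [hT]; exact Multiset.mem_cons_of_mem hy)
  rcases h with ⟨g, hg, hT⟩ | ⟨g, hg, h, hh, hT | hT⟩
  · refine key g g⁻¹ hg hT (inv_mem (Subgroup.subset_closure hg)) ?_
    have := hvT _ _ hT
    simpa using inv_mem this
  · refine key g (h * g) hg hT
      (mul_mem (Subgroup.subset_closure (Multiset.mem_of_mem_erase hh))
        (Subgroup.subset_closure hg)) ?_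
    have h1 : h * g ∈ Subgroup.closure {x : G | x ∈ T} := hvT _ _ hT
    have h2 : h ∈ Subgroup.closure {x : G | x ∈ T} := hRT _ _ hT h hh
    simpa using mul_mem (inv_mem h2) h1
  · refine key g (g * h) hg hT
      (mul_mem (Subgroup.subset_closure hg)
        (Subgroup.subset_closure (Multiset.mem_of_mem_erase hh))) ?_
    have h1 : g * h ∈ Subgroup.closure {x : G | x ∈ T} := hvT _ _ hT
    have h2 : h ∈ Subgroup.closure {x : G | x ∈ T} := hRT _ _ hT h hh
    simpa [mul_assoc] using mul_mem h1 (inv_mem h2)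

lemma nielsenEquiv_card {S T : Multiset G} (h : NielsenEquiv S T) :
    Multiset.card T = Multiset.card S := by
  induction h with
  | refl => rfl
  | tail _ hmov ih => rw [nielsenMove_card hmov, ih]

lemma nielsenEquiv_closure {S T : Multiset G} (h : NielsenEquiv S T) :
    Subgroup.closure {x : G | x ∈ T} = Subgroup.closure {x : G | x ∈ S} := by
  induction h with
  | refl => rfl
  | tail _ hmov ih => rw [nielsenMove_closure hmov, ih]

lemma move_inv (R : Multiset G) (g : G) : NielsenMove (g ::ₘ R) (g⁻¹ ::ₘ R) :=
  Or.inl ⟨g, Multiset.mem_cons_self g R, by rw [Multiset.erase_cons_head]⟩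

lemma move_left {R : Multiset G} {h : G} (g : G) (hh : h ∈ R) :
    NielsenMove (g ::ₘ R) (h * g ::ₘ R) :=
  Or.inr ⟨g, Multiset.mem_cons_self g R, h, by rw [Multiset.erase_cons_head]; exact hh,
    Or.inl (by rw [Multiset.erase_cons_head])⟩

lemma equiv_mul_left {R : Multiset G} {h : G} (g : G) (hh : h ∈ R) :
    NielsenEquiv (g ::ₘ R) (h * g ::ₘ R) :=
  Relation.ReflTransGen.single (move_left g hh)

lemma equiv_inv_mul_left {R : Multiset G} {h : G} (g : G) (hh : h ∈ R) :
    NielsenEquiv (g ::ₘ R) (h⁻¹ * g ::ₘ R) := by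
  obtain ⟨R', rfl⟩ : ∃ R', R = h ::ₘ R' := ⟨R.erase h, (Multiset.cons_erase hh).symm⟩
  have s1 : NielsenMove (g ::ₘ h ::ₘ R') (g ::ₘ h⁻¹ ::ₘ R') := by
    have := move_inv (g ::ₘ R') h
    rwa [Multiset.cons_swap h g, Multiset.cons_swap h⁻¹ g] at this
  have s2 : NielsenMove (g ::ₘ h⁻¹ ::ₘ R') ((h⁻¹ * g) ::ₘ h⁻¹ ::ₘ R') :=
    move_left g (Multiset.mem_cons_self h⁻¹ R')
  have s3 : NielsenMove ((h⁻¹ * g) ::ₘ h⁻¹ ::ₘ R') ((h⁻¹ * g) ::ₘ h ::ₘ R') := by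
    have := move_inv ((h⁻¹ * g) ::ₘ R') h⁻¹
    rw [inv_inv] at this
    rwa [Multiset.cons_swap h⁻¹ (h⁻¹ * g), Multiset.cons_swap h (h⁻¹ * g)] at this
  exact Relation.ReflTransGen.head s1 (Relation.ReflTransGen.head s2
    (Relation.ReflTransGen.single s3))

variable (H : Subgroup G)

/-- Escape lemma: if the cosets hit by `S` do not fill `G⧸H` then some product
`s * x` with `s, x ∈ S` lands outside. -/
lemma exists_escape [H.FiniteIndex] (S : Multiset G)
    (hgen : Subgroup.closure {x : G | x ∈ S} = ⊤)
    (hlt : (S.map fun x => ((x : G) : G ⧸ H)).toFinset.card < H.index)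
    (hne : S ≠ 0) :
    ∃ s ∈ S, ∃ x ∈ S, ((s * x : G) : G ⧸ H) ∉ (S.map fun x => ((x : G) : G ⧸ H)).toFinset := by
  classical
  haveI : Fintype (G ⧸ H) := Fintype.ofFinite _
  set C : Finset (G ⧸ H) := (S.map fun x => ((x : G) : G ⧸ H)).toFinset with hC
  by_contra hcon
  push_neg at hcon
  -- the setwise stabilizer of C as a subgroup
  have hstab : ∀ s ∈ S, ∀ c ∈ C, s • c ∈ C := by
    intro s hs c hc
    rw [hC, Multiset.mem_toFinset, Multiset.mem_map] at hc
    obtain ⟨x, hx, rfl⟩ := hc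
    have := hcon s hs x hx
    rwa [MulAction.Quotient.smul_mk, smul_eq_mul]
  let K : Subgroup G :=
    { carrier := {g : G | ∀ c ∈ C, g • c ∈ C}
      one_mem' := by intro c hc; simpa using hc
      mul_mem' := by
        intro a b ha hb c hc
        rw [mul_smul]; exact ha _ (hb _ hc)
      inv_mem' := by
        intro a ha c hc
        have himg : C.image (a • ·) = C :=
          Finset.eq_of_subset_of_card_le
            (fun y hy => by
              obtain ⟨d, hd, rfl⟩ := Finset.mem_image.mp hy
              exact ha _ hd)
            (le_of_eq (Finset.card_image_of_injective C (MulAction.injective a)).symm)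
        rw [← himg] at hc
        obtain ⟨d, hd, had⟩ := Finset.mem_image.mp hc
        have : a⁻¹ • c = d := by rw [← had, inv_smul_smul]
        rwa [this] }
  have hKtop : K = ⊤ := by
    rw [← top_le_iff, ← hgen, Subgroup.closure_le]
    intro s hs
    exact hstab s hs
  obtain ⟨x₀, hx₀⟩ := Multiset.exists_mem_of_ne_zero hne
  have hx₀C : ((x₀ : G) : G ⧸ H) ∈ C := by
    rw [hC, Multiset.mem_toFinset, Multiset.mem_map]; exact ⟨x₀, hx₀, rfl⟩
  have hall : ∀ c : G ⧸ H, c ∈ C := by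
    intro c
    have hg : (c.out * x₀⁻¹ : G) ∈ K := hKtop ▸ Subgroup.mem_top _
    have := hg _ hx₀C
    rwa [MulAction.Quotient.smul_mk, smul_eq_mul, inv_mul_cancel_right,
      QuotientGroup.out_eq'] at this
  have : C = Finset.univ := Finset.eq_univ_iff_forall.mpr hall
  rw [this, Finset.card_univ, ← Nat.card_eq_fintype_card, ← Subgroup.index_eq_card] at hlt
  exact lt_irrefl _ hlt

/-- Part 1: the Nielsen-equivalence to a left-distinct multiset, by induction on
the deficiency `|S| - #(cosets hit)`. -/
lemma part1 [H.FiniteIndex] :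
    ∀ (n : ℕ) (S : Multiset G),
      Multiset.card S - (S.map fun x => ((x : G) : G ⧸ H)).toFinset.card ≤ n →
      Subgroup.closure {x : G | x ∈ S} = ⊤ → Multiset.card S ≤ H.index →
      ∃ S', NielsenEquiv S S' ∧ LeftDistinct H S' := by
  classical
  intro n
  induction n with
  | zero =>
    intro S hmeas hgen hcard
    refine ⟨S, Relation.ReflTransGen.refl, ?_⟩
    have h1 : (S.map fun x => ((x : G) : G ⧸ H)).toFinset.card
        = Multiset.card (S.map fun x => ((x : G) : G ⧸ H)) := by
      have := Multiset.toFinset_card_le (S.map fun x => ((x : G) : G ⧸ H))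
      rw [Multiset.card_map] at this ⊢
      omega
    exact Multiset.toFinset_card_eq_card_iff_nodup.mp h1
  | succ n ih =>
    intro S hmeas hgen hcard
    by_cases hnd : (S.map fun x => ((x : G) : G ⧸ H)).Nodup
    · exact ⟨S, Relation.ReflTransGen.refl, hnd⟩
    -- notation
    set q : G → G ⧸ H := fun x => ((x : G) : G ⧸ H) with hq
    set C : Finset (G ⧸ H) := (S.map q).toFinset with hCdef
    have hClt : C.card < Multiset.card S := by
      have h1 := Multiset.toFinset_card_le (S.map q)
      have h2 : C.card ≠ Multiset.card (S.map q) :=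
        fun h => hnd (Multiset.toFinset_card_eq_card_iff_nodup.mp h)
      rw [Multiset.card_map] at h1 h2
      have hdC : (Multiset.map q S).toFinset.card = C.card := rfl
      omega
    have hne : S ≠ 0 := by
      intro h; rw [h] at hClt; simp at hClt
    -- find the escaping product
    obtain ⟨s, hs, x, hx, hesc⟩ := exists_escape H S hgen (lt_of_lt_of_le hClt hcard) hne
    -- find a duplicate pair
    obtain ⟨b0, hb0, a0, ha0, hab0⟩ :
        ∃ b ∈ S, ∃ a ∈ S.erase b, q a = q b := by
      rw [Multiset.nodup_iff_count_le_one] at hnd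
      push_neg at hnd
      obtain ⟨c, hc⟩ := hnd
      have hcmem : c ∈ S.map q := Multiset.count_pos.mp (by omega)
      obtain ⟨b, hb, rfl⟩ := Multiset.mem_map.mp hcmem
      have hcount : Multiset.count (q b) ((S.erase b).map q) ≥ 1 := by
        have hmapS : S.map q = q b ::ₘ (S.erase b).map q := by
          conv_lhs => rw [← Multiset.cons_erase hb]
          rw [Multiset.map_cons]
        rw [hmapS, Multiset.count_cons_self] at hc
        omega
      have hmem : q b ∈ (S.erase b).map q := by
        rw [← Multiset.count_pos]; omega
      obtain ⟨a, ha, haq⟩ := Multiset.mem_map.mp hmem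
      exact ⟨b, hb, a, ha, haq⟩
    -- arrange that s avoids the replaced occurrence
    obtain ⟨b, hb, a, ha, hab, hsb⟩ :
        ∃ b ∈ S, ∃ a ∈ S.erase b, q a = q b ∧ s ∈ S.erase b := by
      by_cases hsb0 : s ∈ S.erase b0
      · exact ⟨b0, hb0, a0, ha0, hab0, hsb0⟩
      · have hsb0' : s = b0 := by
          by_contra hne'
          exact hsb0 ((Multiset.mem_erase_of_ne hne').mpr hs)
        have hane : a0 ≠ b0 := by
          intro h; rw [h] at ha0; rw [hsb0'] at hsb0; exact hsb0 ha0
        refine ⟨a0, Multiset.mem_of_mem_erase ha0, b0, ?_, hab0.symm, ?_⟩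
        · exact (Multiset.mem_erase_of_ne hane.symm).mpr hb0
        · rw [hsb0']; exact (Multiset.mem_erase_of_ne hane.symm).mpr hb0
    -- pick the carrier of x's coset inside S.erase b
    obtain ⟨g', hg', hg'x⟩ : ∃ g' ∈ S.erase b, q g' = q x := by
      by_cases hxb : x ∈ S.erase b
      · exact ⟨x, hxb, rfl⟩
      · have hxb' : x = b := by
          by_contra hne'
          exact hxb ((Multiset.mem_erase_of_ne hne').mpr hx)
        exact ⟨a, ha, by rw [hab, hxb']⟩
    set R := S.erase b with hR
    set v : G := s * (g' * (a⁻¹ * b)) with hv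
    have hSe : S = b ::ₘ R := (Multiset.cons_erase hb).symm
    have hequiv : NielsenEquiv S (v ::ₘ R) := by
      rw [hSe]
      exact (equiv_inv_mul_left b ha).trans
        ((equiv_mul_left (a⁻¹ * b) hg').trans (equiv_mul_left (g' * (a⁻¹ * b)) hsb))
    have hqv : q v = q (s * x) := by
      rw [hq]
      simp only []
      rw [QuotientGroup.eq]
      have h1 : a⁻¹ * b ∈ H := QuotientGroup.eq.mp hab
      have h2 : g'⁻¹ * x ∈ H := QuotientGroup.eq.mp hg'x
      have hident : v⁻¹ * (s * x) = (a⁻¹ * b)⁻¹ * (g'⁻¹ * x) := by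
        rw [hv]; group
      rw [hident]
      exact mul_mem (inv_mem h1) h2
    have hqvC : q v ∉ C := by rw [hqv]; exact hesc
    -- new data
    have hcard' : Multiset.card (v ::ₘ R) = Multiset.card S := by
      rw [Multiset.card_cons, hR, Multiset.card_erase_add_one hb]
    have hRC : ((R.map q)).toFinset = C := by
      rw [hCdef]
      conv_rhs => rw [hSe]
      rw [Multiset.map_cons, Multiset.toFinset_cons]
      have : q b ∈ (R.map q).toFinset := by
        rw [Multiset.mem_toFinset, Multiset.mem_map]
        exact ⟨a, ha, hab⟩
      rw [Finset.insert_eq_self.mpr this]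
    have hnewC : (((v ::ₘ R).map q)).toFinset.card = C.card + 1 := by
      rw [Multiset.map_cons, Multiset.toFinset_cons, Finset.card_insert_of_notMem
        (by rw [hRC]; exact hqvC), hRC]
    have hgen' : Subgroup.closure {y : G | y ∈ (v ::ₘ R)} = ⊤ := by
      rw [nielsenEquiv_closure hequiv]; exact hgen
    have hmeas' : Multiset.card (v ::ₘ R) - (((v ::ₘ R).map q)).toFinset.card ≤ n := by
      rw [hcard', hnewC]
      have hdC : (Multiset.map q S).toFinset.card = C.card := rfl
      omega
    obtain ⟨S', hS'equiv, hS'ld⟩ := ih (v ::ₘ R) hmeas' hgen' (by rw [hcard']; exact hcard)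
    exact ⟨S', hequiv.trans hS'equiv, hS'ld⟩

/-- Part 2: a left-distinct generating multiset extends to a generating transversal. -/
lemma part2 (S' : Multiset G) (hld : LeftDistinct H S')
    (hgen : Subgroup.closure {x : G | x ∈ S'} = ⊤) :
    ∃ T : Set G, IsLeftTransversal H T ∧ Subgroup.closure T = ⊤ := by
  classical
  set q : G → G ⧸ H := fun x => ((x : G) : G ⧸ H) with hq
  refine ⟨{x : G | x ∈ S'} ∪ (fun c : G ⧸ H => c.out) '' {c | ∀ x ∈ S', q x ≠ c}, ?_, ?_⟩
  · intro g
    by_cases hc : ∃ x ∈ S', q x = q g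
    · obtain ⟨x, hx, hqx⟩ := hc
      refine ⟨x, ⟨Or.inl hx, hqx⟩, ?_⟩
      rintro t' ⟨ht' | ht', hqt'⟩
      · exact Multiset.inj_on_of_nodup_map hld t' ht' x hx (hqt'.trans hqx.symm)
      · obtain ⟨c, hcmem, rfl⟩ := ht'
        have hceq : c = q g := by rw [← QuotientGroup.out_eq' c]; exact hqt'
        exact absurd (hqx.trans hceq.symm) (hcmem x hx)
    · push_neg at hc
      refine ⟨(q g).out, ⟨Or.inr ⟨q g, hc, rfl⟩, QuotientGroup.out_eq' _⟩, ?_⟩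
      rintro t' ⟨ht' | ht', hqt'⟩
      · exact absurd hqt' (hc t' ht')
      · obtain ⟨c, _, rfl⟩ := ht'
        have hceq : c = q g := by rw [← QuotientGroup.out_eq' c]; exact hqt'
        exact congrArg Quotient.out hceq
  · rw [eq_top_iff, ← hgen]
    exact Subgroup.closure_mono Set.subset_union_left

end Aux

/-- if `S` generates `G` and `[G:H] ≥ |S|` with `H` of finite index,
then `S` is Nielsen equivalent to a multiset with entries in pairwise distinct
left cosets of `H`; in particular some left transversal of `H` generates `G`. -/
theorem stmt4 {G : Type*} [Group G] (H : Subgroup G) [H.FiniteIndex]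
    (S : Multiset G) (hgen : Subgroup.closure {x : G | x ∈ S} = ⊤)
    (hcard : S.card ≤ H.index) :
    (∃ S' : Multiset G, NielsenEquiv S S' ∧ LeftDistinct H S') ∧
      ∃ T : Set G, IsLeftTransversal H T ∧ Subgroup.closure T = ⊤ := by
  obtain ⟨S', h1, h2⟩ := part1 H (Multiset.card S) S (Nat.sub_le _ _) hgen hcard
  exact ⟨⟨S', h1, h2⟩, part2 H S' h2 (by rw [nielsenEquiv_closure h1]; exact hgen)⟩
end

section
/- Let G be a group, H ≤ G a subgroup of finite index, and S ⊆ G a left-right clean finite multiset with |S| ≤ [G:H] and |S ∩ H| ≥ 2. Suppose there exist s ∈ S and a positive integer n such that s^n lies in a different left coset of H and a different right coset of H from every element of S. Then a left-right extraction from S is possible: there is a multiset S' Nielsen equivalent to S with S' left-right clean and |S' ∩ H| = |S ∩ H| − 1. -/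
open scoped Classical

section Aux

variable {G : Type*} [Group G]

lemma nielsenMove_inv (a : G) (T : Multiset G) : NielsenMove (a ::ₘ T) (a⁻¹ ::ₘ T) :=
  Or.inl ⟨a, Multiset.mem_cons_self a T, by rw [Multiset.erase_cons_head]⟩

lemma nielsenMove_mull (a b : G) (T : Multiset G) :
    NielsenMove (a ::ₘ b ::ₘ T) ((b * a) ::ₘ b ::ₘ T) :=
  Or.inr ⟨a, Multiset.mem_cons_self a _,
    b, by rw [Multiset.erase_cons_head]; exact Multiset.mem_cons_self b T,
    Or.inl (by rw [Multiset.erase_cons_head])⟩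

lemma nielsenMove_mulr (a b : G) (T : Multiset G) :
    NielsenMove (a ::ₘ b ::ₘ T) ((a * b) ::ₘ b ::ₘ T) :=
  Or.inr ⟨a, Multiset.mem_cons_self a _,
    b, by rw [Multiset.erase_cons_head]; exact Multiset.mem_cons_self b T,
    Or.inr (by rw [Multiset.erase_cons_head])⟩

lemma ne_inv (a : G) (T : Multiset G) : NielsenEquiv (a ::ₘ T) (a⁻¹ ::ₘ T) :=
  Relation.ReflTransGen.single (nielsenMove_inv a T)

lemma ne_inv' (a : G) (T : Multiset G) : NielsenEquiv (a⁻¹ ::ₘ T) (a ::ₘ T) := by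
  have h := ne_inv a⁻¹ T
  rwa [inv_inv] at h

lemma ne_mull (a b : G) (T : Multiset G) :
    NielsenEquiv (a ::ₘ b ::ₘ T) ((b * a) ::ₘ b ::ₘ T) :=
  Relation.ReflTransGen.single (nielsenMove_mull a b T)

lemma ne_mulr (a b : G) (T : Multiset G) :
    NielsenEquiv (a ::ₘ b ::ₘ T) ((a * b) ::ₘ b ::ₘ T) :=
  Relation.ReflTransGen.single (nielsenMove_mulr a b T)

lemma ne_mulr_inv (a b : G) (T : Multiset G) :
    NielsenEquiv (a ::ₘ b ::ₘ T) ((a * b⁻¹) ::ₘ b ::ₘ T) := by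
  have h1 : NielsenEquiv (a ::ₘ b ::ₘ T) (a ::ₘ b⁻¹ ::ₘ T) := by
    rw [Multiset.cons_swap a b, Multiset.cons_swap a b⁻¹]
    exact ne_inv b (a ::ₘ T)
  have h2 := ne_mulr a b⁻¹ T
  have h3 : NielsenEquiv ((a * b⁻¹) ::ₘ b⁻¹ ::ₘ T) ((a * b⁻¹) ::ₘ b ::ₘ T) := by
    rw [Multiset.cons_swap (a * b⁻¹) b⁻¹, Multiset.cons_swap (a * b⁻¹) b]
    exact ne_inv' b _
  exact (h1.trans h2).trans h3

lemma ne_pow_left (n : ℕ) (a b : G) (T : Multiset G) :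
    NielsenEquiv (a ::ₘ b ::ₘ T) ((b ^ n * a) ::ₘ b ::ₘ T) := by
  induction n with
  | zero =>
      rw [pow_zero, one_mul]
      exact Relation.ReflTransGen.refl
  | succ k ih =>
      refine ih.trans ?_
      have h := ne_mull (b ^ k * a) b T
      rwa [← mul_assoc, ← pow_succ'] at h

lemma rot4 {α : Type*} (a b c d : α) (R : Multiset α) :
    a ::ₘ b ::ₘ c ::ₘ d ::ₘ R = d ::ₘ a ::ₘ b ::ₘ c ::ₘ R := by
  rw [Multiset.cons_swap c d, Multiset.cons_swap b d, Multiset.cons_swap a d]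

/-- The main extraction step. -/
lemma extraction_main (H : Subgroup G) (u u2 s w h2' : G) (n : ℕ) (S3 : Multiset G)
    (hu : u ∈ H) (hu2 : u2 ∈ H) (hs : s ∉ H) (hw : w ∈ H) (hh2 : h2' ∈ H)
    (hfresh : ∀ t ∈ (u ::ₘ u2 ::ₘ s ::ₘ S3),
      ((s ^ n : G) : G ⧸ H) ≠ ((t : G) : G ⧸ H) ∧
      (((s ^ n)⁻¹ : G) : G ⧸ H) ≠ ((t⁻¹ : G) : G ⧸ H))
    (hy : (((s ^ n * w)⁻¹ : G) : G ⧸ H) ≠ ((s⁻¹ : G) : G ⧸ H))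
    (hLD : LeftDistinct H ((u ::ₘ u2 ::ₘ s ::ₘ S3).filter fun x => x ∉ H))
    (hRD : RightDistinct H ((u ::ₘ u2 ::ₘ s ::ₘ S3).filter fun x => x ∉ H))
    (P1 : ∀ X : Multiset G, NielsenEquiv (u ::ₘ u2 ::ₘ X) (w ::ₘ h2' ::ₘ X))
    (P2 : ∀ (τ : G) (X : Multiset G),
      NielsenEquiv (τ ::ₘ u ::ₘ u2 ::ₘ X) ((τ * w⁻¹) ::ₘ u ::ₘ u2 ::ₘ X)) :
    ∃ S' : Multiset G, NielsenEquiv (u ::ₘ u2 ::ₘ s ::ₘ S3) S' ∧ LeftRightClean H S' ∧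
      (S'.filter fun x => x ∈ H).card =
        ((u ::ₘ u2 ::ₘ s ::ₘ S3).filter fun x => x ∈ H).card - 1 := by
  have hvql : ((s ^ n * w : G) : G ⧸ H) = ((s ^ n : G) : G ⧸ H) :=
    QuotientGroup.mk_mul_of_mem _ hw
  have hvnot : s ^ n * w ∉ H := by
    intro hvmem
    have h1 : ((s ^ n * w : G) : G ⧸ H) = ((u2 : G) : G ⧸ H) :=
      QuotientGroup.eq.mpr (H.mul_mem (H.inv_mem hvmem) hu2)
    exact (hfresh u2 (by simp)).1 (by rw [← hvql]; exact h1)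
  by_cases hcol : ∃ t ∈ S3, t ∉ H ∧ ((t⁻¹ : G) : G ⧸ H) = (((s ^ n * w)⁻¹ : G) : G ⧸ H)
  · -- collision case
    obtain ⟨τ, hτ3, hτH, hτcol⟩ := hcol
    have hS34 : S3 = τ ::ₘ S3.erase τ := (Multiset.cons_erase hτ3).symm
    set S4 := S3.erase τ with hS4def
    have hτwnot : τ * w⁻¹ ∉ H := by
      intro hmem
      have h1 := H.mul_mem hmem hw
      rw [inv_mul_cancel_right] at h1
      exact hτH h1
    have hτmem : τ ∈ u ::ₘ u2 ::ₘ s ::ₘ S3 :=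
      Multiset.mem_cons_of_mem (Multiset.mem_cons_of_mem (Multiset.mem_cons_of_mem hτ3))
    have hτwl : ((τ * w⁻¹ : G) : G ⧸ H) = ((τ : G) : G ⧸ H) :=
      QuotientGroup.mk_mul_of_mem τ (H.inv_mem hw)
    have key2 : (((τ * w⁻¹)⁻¹ : G) : G ⧸ H) = (((s ^ n)⁻¹ : G) : G ⧸ H) := by
      have m := QuotientGroup.eq.mp hτcol
      rw [inv_inv, mul_inv_rev] at m
      refine QuotientGroup.eq.mpr ?_
      rw [inv_inv, mul_assoc]
      exact m
    refine ⟨(s ^ n * w) ::ₘ s ::ₘ h2' ::ₘ (τ * w⁻¹) ::ₘ S4, ?_, ?_, ?_⟩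
    · -- Nielsen chain
      rw [hS34]
      have e0 : NielsenEquiv (u ::ₘ u2 ::ₘ s ::ₘ τ ::ₘ S4)
          ((τ * w⁻¹) ::ₘ u ::ₘ u2 ::ₘ s ::ₘ S4) := by
        rw [rot4 u u2 s τ S4]
        exact P2 τ (s ::ₘ S4)
      have e1 : NielsenEquiv ((τ * w⁻¹) ::ₘ u ::ₘ u2 ::ₘ s ::ₘ S4)
          (w ::ₘ h2' ::ₘ s ::ₘ (τ * w⁻¹) ::ₘ S4) := by
        rw [← rot4 u u2 s (τ * w⁻¹) S4]
        exact P1 (s ::ₘ (τ * w⁻¹) ::ₘ S4)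
      have e2 : NielsenEquiv (w ::ₘ h2' ::ₘ s ::ₘ (τ * w⁻¹) ::ₘ S4)
          ((s ^ n * w) ::ₘ s ::ₘ h2' ::ₘ (τ * w⁻¹) ::ₘ S4) := by
        rw [Multiset.cons_swap h2' s]
        exact ne_pow_left n w s _
      exact (e0.trans e1).trans e2
    · -- cleanliness
      have fS : ((u ::ₘ u2 ::ₘ s ::ₘ S3).filter fun x => x ∉ H) =
          s ::ₘ τ ::ₘ (S4.filter fun x => x ∉ H) := by
        rw [hS34, Multiset.filter_cons_of_neg (p := fun x => x ∉ H) _ (not_not_intro hu),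
          Multiset.filter_cons_of_neg (p := fun x => x ∉ H) _ (not_not_intro hu2),
          Multiset.filter_cons_of_pos (p := fun x => x ∉ H) _ hs, Multiset.filter_cons_of_pos (p := fun x => x ∉ H) _ hτH]
      have fS' : (((s ^ n * w) ::ₘ s ::ₘ h2' ::ₘ (τ * w⁻¹) ::ₘ S4).filter fun x => x ∉ H) =
          (s ^ n * w) ::ₘ s ::ₘ (τ * w⁻¹) ::ₘ (S4.filter fun x => x ∉ H) := by
        rw [Multiset.filter_cons_of_pos (p := fun x => x ∉ H) _ hvnot, Multiset.filter_cons_of_pos (p := fun x => x ∉ H) _ hs,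
          Multiset.filter_cons_of_neg (p := fun x => x ∉ H) _ (not_not_intro hh2),
          Multiset.filter_cons_of_pos (p := fun x => x ∉ H) _ hτwnot]
      have hmemS4f : ∀ t ∈ S4.filter fun x => x ∉ H, t ∈ u ::ₘ u2 ::ₘ s ::ₘ S3 := by
        intro t ht
        have h1 : t ∈ S4 := (Multiset.mem_filter.mp ht).1
        have h2 : t ∈ S3 := by rw [hS34]; exact Multiset.mem_cons_of_mem h1
        exact Multiset.mem_cons_of_mem (Multiset.mem_cons_of_mem (Multiset.mem_cons_of_mem h2))
      refine ⟨⟨s ^ n * w, Multiset.mem_cons_self _ _, hvnot⟩, ?_, ?_⟩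
      · -- LeftDistinct
        unfold LeftDistinct at hLD ⊢
        rw [fS']
        rw [fS] at hLD
        simp only [Multiset.map_cons] at hLD ⊢
        rw [hvql, hτwl]
        refine Multiset.nodup_cons.mpr ⟨?_, hLD⟩
        intro hmem
        simp only [Multiset.mem_cons] at hmem
        rcases hmem with h | h | h
        · exact (hfresh s (by simp)).1 h
        · exact (hfresh τ hτmem).1 h
        · obtain ⟨t, htf, he⟩ := Multiset.mem_map.mp h
          exact (hfresh t (hmemS4f t htf)).1 he.symm
      · -- RightDistinct
        unfold RightDistinct at hRD ⊢
        rw [fS']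
        rw [fS] at hRD
        simp only [Multiset.map_cons] at hRD ⊢
        rw [key2, ← hτcol]
        rw [Multiset.nodup_cons] at hRD
        obtain ⟨hs1, hR2⟩ := hRD
        rw [Multiset.nodup_cons] at hR2
        obtain ⟨hτ1, hM⟩ := hR2
        refine Multiset.nodup_cons.mpr ⟨?_, Multiset.nodup_cons.mpr ⟨?_, Multiset.nodup_cons.mpr ⟨?_, hM⟩⟩⟩
        · intro hmem
          simp only [Multiset.mem_cons] at hmem
          rcases hmem with h | h | h
          · apply hs1
            rw [← h]
            exact Multiset.mem_cons_self _ _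
          · exact (hfresh τ hτmem).2 h.symm
          · exact hτ1 h
        · intro hmem
          simp only [Multiset.mem_cons] at hmem
          rcases hmem with h | h
          · exact (hfresh s (by simp)).2 h.symm
          · exact hs1 (Multiset.mem_cons_of_mem h)
        · intro hmem
          obtain ⟨t, htf, he⟩ := Multiset.mem_map.mp hmem
          exact (hfresh t (hmemS4f t htf)).2 he.symm
    · -- card
      have gS : ((u ::ₘ u2 ::ₘ s ::ₘ S3).filter fun x => x ∈ H) =
          u ::ₘ u2 ::ₘ (S4.filter fun x => x ∈ H) := by
        rw [hS34, Multiset.filter_cons_of_pos (p := fun x => x ∈ H) _ hu, Multiset.filter_cons_of_pos (p := fun x => x ∈ H) _ hu2,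
          Multiset.filter_cons_of_neg (p := fun x => x ∈ H) _ hs, Multiset.filter_cons_of_neg (p := fun x => x ∈ H) _ hτH]
      have gS' : (((s ^ n * w) ::ₘ s ::ₘ h2' ::ₘ (τ * w⁻¹) ::ₘ S4).filter fun x => x ∈ H) =
          h2' ::ₘ (S4.filter fun x => x ∈ H) := by
        rw [Multiset.filter_cons_of_neg (p := fun x => x ∈ H) _ hvnot, Multiset.filter_cons_of_neg (p := fun x => x ∈ H) _ hs,
          Multiset.filter_cons_of_pos (p := fun x => x ∈ H) _ hh2, Multiset.filter_cons_of_neg (p := fun x => x ∈ H) _ hτwnot]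
      rw [gS, gS']
      simp only [Multiset.card_cons]
      omega
  · -- no collision case
    push_neg at hcol
    refine ⟨(s ^ n * w) ::ₘ s ::ₘ h2' ::ₘ S3, ?_, ?_, ?_⟩
    · have e1 := P1 (s ::ₘ S3)
      have e2 : NielsenEquiv (w ::ₘ h2' ::ₘ s ::ₘ S3)
          ((s ^ n * w) ::ₘ s ::ₘ h2' ::ₘ S3) := by
        rw [Multiset.cons_swap h2' s]
        exact ne_pow_left n w s _
      exact e1.trans e2
    · have fS : ((u ::ₘ u2 ::ₘ s ::ₘ S3).filter fun x => x ∉ H) =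
          s ::ₘ (S3.filter fun x => x ∉ H) := by
        rw [Multiset.filter_cons_of_neg (p := fun x => x ∉ H) _ (not_not_intro hu),
          Multiset.filter_cons_of_neg (p := fun x => x ∉ H) _ (not_not_intro hu2),
          Multiset.filter_cons_of_pos (p := fun x => x ∉ H) _ hs]
      have fS' : (((s ^ n * w) ::ₘ s ::ₘ h2' ::ₘ S3).filter fun x => x ∉ H) =
          (s ^ n * w) ::ₘ s ::ₘ (S3.filter fun x => x ∉ H) := by
        rw [Multiset.filter_cons_of_pos (p := fun x => x ∉ H) _ hvnot, Multiset.filter_cons_of_pos (p := fun x => x ∉ H) _ hs,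
          Multiset.filter_cons_of_neg (p := fun x => x ∉ H) _ (not_not_intro hh2)]
      have hmemS3f : ∀ t ∈ S3.filter fun x => x ∉ H, t ∈ u ::ₘ u2 ::ₘ s ::ₘ S3 := by
        intro t ht
        have h1 : t ∈ S3 := (Multiset.mem_filter.mp ht).1
        exact Multiset.mem_cons_of_mem (Multiset.mem_cons_of_mem (Multiset.mem_cons_of_mem h1))
      refine ⟨⟨s ^ n * w, Multiset.mem_cons_self _ _, hvnot⟩, ?_, ?_⟩
      · unfold LeftDistinct at hLD ⊢
        rw [fS']
        rw [fS] at hLD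
        simp only [Multiset.map_cons] at hLD ⊢
        rw [hvql]
        refine Multiset.nodup_cons.mpr ⟨?_, hLD⟩
        intro hmem
        simp only [Multiset.mem_cons] at hmem
        rcases hmem with h | h
        · exact (hfresh s (by simp)).1 h
        · obtain ⟨t, htf, he⟩ := Multiset.mem_map.mp h
          exact (hfresh t (hmemS3f t htf)).1 he.symm
      · unfold RightDistinct at hRD ⊢
        rw [fS']
        rw [fS] at hRD
        simp only [Multiset.map_cons] at hRD ⊢
        refine Multiset.nodup_cons.mpr ⟨?_, hRD⟩
        intro hmem
        simp only [Multiset.mem_cons] at hmem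
        rcases hmem with h | h
        · exact hy h
        · obtain ⟨t, htf, he⟩ := Multiset.mem_map.mp h
          have h1 := Multiset.mem_filter.mp htf
          exact hcol t h1.1 h1.2 he
          -- hcol : ∀ t ∈ S3, t ∉ H → mk t⁻¹ ≠ mk (s^n*w)⁻¹ ; he : mk t⁻¹ = mk (s^n*w)⁻¹? check
    · have gS : ((u ::ₘ u2 ::ₘ s ::ₘ S3).filter fun x => x ∈ H) =
          u ::ₘ u2 ::ₘ (S3.filter fun x => x ∈ H) := by
        rw [Multiset.filter_cons_of_pos (p := fun x => x ∈ H) _ hu, Multiset.filter_cons_of_pos (p := fun x => x ∈ H) _ hu2,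
          Multiset.filter_cons_of_neg (p := fun x => x ∈ H) _ hs]
      have gS' : (((s ^ n * w) ::ₘ s ::ₘ h2' ::ₘ S3).filter fun x => x ∈ H) =
          h2' ::ₘ (S3.filter fun x => x ∈ H) := by
        rw [Multiset.filter_cons_of_neg (p := fun x => x ∈ H) _ hvnot, Multiset.filter_cons_of_neg (p := fun x => x ∈ H) _ hs,
          Multiset.filter_cons_of_pos (p := fun x => x ∈ H) _ hh2]
      rw [gS, gS']
      simp only [Multiset.card_cons]
      omega

end Aux

/-- if `S` is left-right clean with `|S| ≤ [G:H]`, `|S ∩ H| ≥ 2`,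
and there are `s ∈ S` and `n > 0` such that `s^n` lies in a different left coset
and a different right coset of `H` from every element of `S`, then a left-right
extraction from `S` is possible. -/
theorem stmt6 {G : Type*} [Group G] (H : Subgroup G) [H.FiniteIndex]
    (S : Multiset G) (hclean : LeftRightClean H S) (hcard : S.card ≤ H.index)
    (hSH : 2 ≤ (S.filter fun x => x ∈ H).card)
    (hdiag : ∃ s ∈ S, ∃ n : ℕ, 0 < n ∧ ∀ t ∈ S,
      ((s ^ n : G) : G ⧸ H) ≠ ((t : G) : G ⧸ H) ∧
      (((s ^ n)⁻¹ : G) : G ⧸ H) ≠ ((t⁻¹ : G) : G ⧸ H)) :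
    ∃ S' : Multiset G, NielsenEquiv S S' ∧ LeftRightClean H S' ∧
      (S'.filter fun x => x ∈ H).card = (S.filter fun x => x ∈ H).card - 1 := by
  obtain ⟨s, hsS, n, hn, hfresh⟩ := hdiag
  obtain ⟨hex, hLD, hRD⟩ := hclean
  have hcard2 : 0 < (S.filter fun x => x ∈ H).card := by omega
  obtain ⟨u, huF⟩ := Multiset.card_pos_iff_exists_mem.mp hcard2
  obtain ⟨huS, huH⟩ := Multiset.mem_filter.mp huF
  have hcard1 : 0 < ((S.filter fun x => x ∈ H).erase u).card := by
    rw [Multiset.card_erase_of_mem huF, Nat.pred_eq_sub_one]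
    omega
  obtain ⟨u2, hu2E⟩ := Multiset.card_pos_iff_exists_mem.mp hcard1
  obtain ⟨hu2S, hu2H⟩ := Multiset.mem_filter.mp (Multiset.mem_of_mem_erase hu2E)
  have hu2E' : u2 ∈ S.erase u :=
    Multiset.mem_of_le (Multiset.erase_le_erase u (Multiset.filter_le _ S)) hu2E
  have hsnH : s ∉ H := by
    intro hmem
    exact (hfresh u huS).1
      (QuotientGroup.eq.mpr (H.mul_mem (H.inv_mem (H.pow_mem hmem n)) huH))
  have hsu : s ≠ u := fun e => hsnH (e ▸ huH)
  have hsu2 : s ≠ u2 := fun e => hsnH (e ▸ hu2H)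
  have hsE1 : s ∈ S.erase u := (Multiset.mem_erase_of_ne hsu).mpr hsS
  have hsE2 : s ∈ (S.erase u).erase u2 := (Multiset.mem_erase_of_ne hsu2).mpr hsE1
  have hSeq : S = u ::ₘ u2 ::ₘ s ::ₘ ((S.erase u).erase u2).erase s := by
    rw [Multiset.cons_erase hsE2, Multiset.cons_erase hu2E', Multiset.cons_erase huS]
  rw [hSeq] at hLD hRD hfresh ⊢
  -- choose w among u⁻¹, u*u2, u*u2*u⁻¹
  by_cases c1 : (((s ^ n * u⁻¹)⁻¹ : G) : G ⧸ H) = ((s⁻¹ : G) : G ⧸ H)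
  · by_cases c2 : (((s ^ n * (u * u2))⁻¹ : G) : G ⧸ H) = ((s⁻¹ : G) : G ⧸ H)
    · by_cases c3 : (((s ^ n * (u * u2 * u⁻¹))⁻¹ : G) : G ⧸ H) = ((s⁻¹ : G) : G ⧸ H)
      · exfalso
        have ha : s ^ n * (u * u2) * s⁻¹ ∈ H := by
          have h := QuotientGroup.eq.mp c2
          rwa [inv_inv] at h
        have hb : s ^ n * (u * u2 * u⁻¹) * s⁻¹ ∈ H := by
          have h := QuotientGroup.eq.mp c3
          rwa [inv_inv] at h
        have hc : s ^ n * u⁻¹ * s⁻¹ ∈ H := by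
          have h := QuotientGroup.eq.mp c1
          rwa [inv_inv] at h
        have hkey : s ^ n * s⁻¹ ∈ H := by
          have hmem := H.mul_mem (H.mul_mem hc (H.inv_mem hb)) ha
          have e : s ^ n * u⁻¹ * s⁻¹ * (s ^ n * (u * u2 * u⁻¹) * s⁻¹)⁻¹ *
              (s ^ n * (u * u2) * s⁻¹) = s ^ n * s⁻¹ := by group
          rwa [e] at hmem
        refine (hfresh s (by simp)).2 (QuotientGroup.eq.mpr ?_)
        rwa [inv_inv]
      · -- w = u*u2*u⁻¹, h2' = u*u2
        refine extraction_main H u u2 s (u * u2 * u⁻¹) (u * u2) n _ huH hu2H hsnH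
          (H.mul_mem (H.mul_mem huH hu2H) (H.inv_mem huH)) (H.mul_mem huH hu2H)
          hfresh c3 hLD hRD ?_ ?_
        · intro X
          have e1 : NielsenEquiv (u ::ₘ u2 ::ₘ X) ((u * u2) ::ₘ u ::ₘ X) := by
            rw [Multiset.cons_swap u u2]
            exact ne_mull u2 u X
          have e2 : NielsenEquiv ((u * u2) ::ₘ u ::ₘ X) ((u * u2) ::ₘ u⁻¹ ::ₘ X) := by
            rw [Multiset.cons_swap (u * u2) u, Multiset.cons_swap (u * u2) u⁻¹]
            exact ne_inv u _
          have e3 : NielsenEquiv ((u * u2) ::ₘ u⁻¹ ::ₘ X)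
              ((u * u2 * u⁻¹) ::ₘ (u * u2) ::ₘ X) := by
            rw [Multiset.cons_swap (u * u2) u⁻¹]
            exact ne_mull u⁻¹ (u * u2) X
          exact (e1.trans e2).trans e3
        · intro τ X
          have e1 := ne_mulr τ u (u2 ::ₘ X)
          have e2 : NielsenEquiv ((τ * u) ::ₘ u ::ₘ u2 ::ₘ X)
              ((τ * u * u2⁻¹) ::ₘ u ::ₘ u2 ::ₘ X) := by
            rw [show (τ * u) ::ₘ u ::ₘ u2 ::ₘ X = (τ * u) ::ₘ u2 ::ₘ u ::ₘ X from
                congrArg _ (Multiset.cons_swap u u2 X),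
              show (τ * u * u2⁻¹) ::ₘ u ::ₘ u2 ::ₘ X = (τ * u * u2⁻¹) ::ₘ u2 ::ₘ u ::ₘ X from
                congrArg _ (Multiset.cons_swap u u2 X)]
            exact ne_mulr_inv (τ * u) u2 (u ::ₘ X)
          have e3 := ne_mulr_inv (τ * u * u2⁻¹) u (u2 ::ₘ X)
          have efin := (e1.trans e2).trans e3
          rwa [show τ * u * u2⁻¹ * u⁻¹ = τ * (u * u2 * u⁻¹)⁻¹ by group] at efin
    · -- w = u*u2, h2' = u2
      refine extraction_main H u u2 s (u * u2) u2 n _ huH hu2H hsnH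
        (H.mul_mem huH hu2H) hu2H hfresh c2 hLD hRD ?_ ?_
      · intro X
        exact ne_mulr u u2 X
      · intro τ X
        have e1 : NielsenEquiv (τ ::ₘ u ::ₘ u2 ::ₘ X) ((τ * u2⁻¹) ::ₘ u ::ₘ u2 ::ₘ X) := by
          rw [show τ ::ₘ u ::ₘ u2 ::ₘ X = τ ::ₘ u2 ::ₘ u ::ₘ X from
              congrArg _ (Multiset.cons_swap u u2 X),
            show (τ * u2⁻¹) ::ₘ u ::ₘ u2 ::ₘ X = (τ * u2⁻¹) ::ₘ u2 ::ₘ u ::ₘ X from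
              congrArg _ (Multiset.cons_swap u u2 X)]
          exact ne_mulr_inv τ u2 (u ::ₘ X)
        have e2 := ne_mulr_inv (τ * u2⁻¹) u (u2 ::ₘ X)
        have efin := e1.trans e2
        rwa [show τ * u2⁻¹ * u⁻¹ = τ * (u * u2)⁻¹ by group] at efin
  · -- w = u⁻¹, h2' = u2
    refine extraction_main H u u2 s u⁻¹ u2 n _ huH hu2H hsnH
      (H.inv_mem huH) hu2H hfresh c1 hLD hRD ?_ ?_
    · intro X
      exact ne_inv u (u2 ::ₘ X)
    · intro τ X
      have e1 := ne_mulr τ u (u2 ::ₘ X)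
      rwa [show τ * u = τ * u⁻¹⁻¹ by rw [inv_inv]] at e1
end
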